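/- Let K be a compact metric space and E a precompact subset of the metric space (F(K), HD) of non-empty closed subsets of K with Hausdorff distance. Then the set F(E) of non-empty closed subsets of E, equipped with the Hausdorff distance induced by HD, is precompact. -/

import Mathlib

open EMetric TopologicalSpace

/-- If a (pseudo-e)metric space is totally bounded, then the space of its closed
subsets with the Hausdorff edistance is totally bounded. -/
theorem totallyBounded_closeds_of_totallyBounded_univ
    (X : Type*) [EMetricSpace X] (hX : TotallyBounded (Set.univ : Set X)) :
    TotallyBounded (Set.univ : Set (Closeds X)) := by
  rw [EMetric.totallyBounded_iff] at hX ⊢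
  intro ε εpos
  obtain ⟨δ, δpos, δlt⟩ := exists_between εpos
  obtain ⟨t, htf, ht⟩ := hX δ δpos
  -- candidate net: closed sets contained in `t`
  refine ⟨{C : Closeds X | (C : Set X) ⊆ t}, ?_, ?_⟩
  · have : Set.InjOn (fun C : Closeds X => (C : Set X)) {C : Closeds X | (C : Set X) ⊆ t} :=
      fun C _ D _ h => by exact SetLike.coe_injective h
    exact Set.Finite.of_finite_image (htf.finite_subsets.subset (by
      rintro _ ⟨C, hC, rfl⟩; exact hC)) this
  · intro D _
    simp only [Set.mem_iUnion, EMetric.mem_ball]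
    by_cases hD : (D : Set X).Nonempty
    · set F : Set X := {x ∈ t | ∃ y ∈ (D : Set X), edist x y ≤ δ} with hF
      have hFt : F ⊆ t := fun x hx => hx.1
      have hFclosed : IsClosed F := (htf.subset hFt).isClosed
      refine ⟨⟨F, hFclosed⟩, hFt, ?_⟩
      have h1 : ∀ x ∈ (D : Set X), ∃ y ∈ F, edist x y ≤ δ := by
        intro x hx
        have : x ∈ ⋃ y ∈ t, ball y δ := ht (Set.mem_univ x)
        simp only [Set.mem_iUnion, EMetric.mem_ball] at this
        obtain ⟨z, hz, hxz⟩ := this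
        have hxz' : edist z x ≤ δ := by rw [edist_comm]; exact hxz.le
        exact ⟨z, ⟨hz, x, hx, hxz'⟩, hxz.le⟩
      have h2 : ∀ x ∈ F, ∃ y ∈ (D : Set X), edist x y ≤ δ := fun x hx => hx.2
      calc edist D (⟨F, hFclosed⟩ : Closeds X)
          = hausdorffEdist (D : Set X) F := rfl
        _ ≤ δ := hausdorffEdist_le_of_mem_edist h1 h2
        _ < ε := δlt
    · refine ⟨⊥, by simp, ?_⟩
      have hDe : (D : Set X) = ∅ := Set.not_nonempty_iff_eq_empty.1 hD
      have : edist D (⊥ : Closeds X) = 0 := by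
        show hausdorffEdist (D : Set X) (⊥ : Closeds X) = 0
        rw [hDe]
        exact hausdorffEdist_self
      rw [this]; exact εpos

/-- If `K` is a compact metric space and `E` is a precompact subset of the space
`F(K)` of non-empty closed (equivalently, non-empty compact, as `K` is compact)
subsets of `K` with the Hausdorff distance, then the space of non-empty closed
subsets of `E`, with the induced Hausdorff distance, is precompact. -/
theorem precompact_closeds_of_precompact_subset
    (K : Type*) [MetricSpace K] [CompactSpace K]
    (E : Set (NonemptyCompacts K))
    (hE : TotallyBounded E) :
    TotallyBounded
      (Set.univ : Set {t : Closeds ↥E // (t : Set ↥E).Nonempty}) := by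
  have hEuniv : TotallyBounded (Set.univ : Set ↥E) := by
    have : (Set.univ : Set ↥E) = Subtype.val ⁻¹' E := by
      ext x; simp [x.2]
    rw [this]
    exact totallyBounded_preimage isUniformEmbedding_subtype_val.isUniformInducing hE
  have h := totallyBounded_closeds_of_totallyBounded_univ ↥E hEuniv
  have : (Set.univ : Set {t : Closeds ↥E // (t : Set ↥E).Nonempty}) =
      Subtype.val ⁻¹' (Set.univ : Set (Closeds ↥E)) := by simp
  rw [this]
  exact totallyBounded_preimage isUniformEmbedding_subtype_val.isUniformInducing h
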